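/- Triangle inequality for the interventional consistency (IC) error under composition of abstractions: D(β_Y·α_Y·μ, μ''·β_X·α_X) ≤ D(α_Y·μ, μ'·α_X) + D(β_Y·μ', μ''·β_X). -/

import Mathlib

open Finset Matrix

noncomputable section

/-- A probability vector on a finite type: nonnegative entries summing to 1. -/
def IsProbVec {X : Type*} [Fintype X] (p : X → ℝ) : Prop :=
  (∀ x, 0 ≤ p x) ∧ ∑ x, p x = 1

/-- Kullback–Leibler divergence, with the convention that terms with `p x = 0`
contribute `0`. -/
noncomputable def KL {X : Type*} [Fintype X] (p q : X → ℝ) : ℝ :=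
  ∑ x, if p x = 0 then 0 else p x * Real.log (p x / q x)

/-- Jensen–Shannon distance. -/
noncomputable def JSD {X : Type*} [Fintype X] (p q : X → ℝ) : ℝ :=
  Real.sqrt ((1 / 2) * KL p (fun x => (p x + q x) / 2)
    + (1 / 2) * KL q (fun x => (p x + q x) / 2))

/-- A column-stochastic matrix: nonnegative entries, every column sums to 1. -/
def IsColStoch {Y X : Type*} [Fintype Y] [Fintype X] (M : Matrix Y X ℝ) : Prop :=
  (∀ y x, 0 ≤ M y x) ∧ ∀ x, ∑ y, M y x = 1

/-- The sup-JSD distance between two matrices of the same shape: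
the maximum over columns of the JSD between corresponding columns. -/
noncomputable def supJSD {Y X : Type*} [Fintype Y] [Fintype X] [Nonempty X]
    (M N : Matrix Y X ℝ) : ℝ :=
  Finset.univ.sup' Finset.univ_nonempty fun x => JSD (fun y => M y x) (fun y => N y x)

/-- An abstraction matrix: entries in {0,1}, every column contains exactly one 1,
and every row contains at least one 1. -/
def IsAbsMatrix {N M : Type*} [Fintype N] [Fintype M] (α : Matrix N M ℝ) : Prop :=
  (∀ j i, α j i = 0 ∨ α j i = 1) ∧ (∀ i, ∃! j, α j i = 1) ∧ (∀ j, ∃ i, α j i = 1)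

/-- The pseudo-inverse `α⁺ = αᵀ·(α·αᵀ)⁻¹` of an abstraction matrix. -/
noncomputable def pinv {N M : Type*} [Fintype N] [Fintype M] [DecidableEq N]
    (α : Matrix N M ℝ) : Matrix M N ℝ :=
  αᵀ * (α * αᵀ)⁻¹

section AuxIC
open Real MeasureTheory Set


/-- `phi x = x log x`. -/
def phiF (x : ℝ) : ℝ := x * Real.log x

/-- pointwise JS divergence summand. -/
def Fd (p q : ℝ) : ℝ := (phiF p + phiF q) / 2 - phiF ((p + q) / 2)

lemma phiF_zero : phiF 0 = 0 := by simp [phiF]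

lemma Fd_self (p : ℝ) : Fd p p = 0 := by unfold Fd phiF; rw [add_self_div_two]; ring

lemma Fd_comm (p q : ℝ) : Fd p q = Fd q p := by simp [Fd]; ring_nf

lemma Fd_zero_zero : Fd 0 0 = 0 := Fd_self 0

lemma Fd_nonneg {p q : ℝ} (hp : 0 ≤ p) (hq : 0 ≤ q) : 0 ≤ Fd p q := by
  have h := Real.convexOn_mul_log.2 (mem_Ici.2 hp) (mem_Ici.2 hq)
    (by norm_num : (0:ℝ) ≤ 1/2) (by norm_num : (0:ℝ) ≤ 1/2) (by norm_num)
  simp only [smul_eq_mul] at h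
  have : (1/2 : ℝ) * p + (1/2) * q = (p + q)/2 := by ring
  rw [this] at h
  unfold Fd phiF
  linarith

/-- `klt a b = a log a - a log b`, a totalized `a log (a/b)`. -/
def klt (a b : ℝ) : ℝ := a * Real.log a - a * Real.log b

lemma Fd_eq_klt (a b : ℝ) : Fd a b = (klt a ((a+b)/2) + klt b ((a+b)/2)) / 2 := by
  simp only [Fd, phiF, klt]; ring

/-- two-term log-sum inequality. -/
lemma klt_add_le {a b c d : ℝ} (ha : 0 ≤ a) (hb : 0 ≤ b) (hc : 0 ≤ c) (hd : 0 ≤ d)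
    (hab : b = 0 → a = 0) (hcd : d = 0 → c = 0) :
    klt (a + c) (b + d) ≤ klt a b + klt c d := by
  rcases eq_or_lt_of_le hb with hb0 | hb0
  · have ha0 : a = 0 := hab hb0.symm
    subst ha0; rw [← hb0]; simp [klt]
  rcases eq_or_lt_of_le hd with hd0 | hd0
  · have hc0 : c = 0 := hcd hd0.symm
    subst hc0; rw [← hd0]; simp [klt]
  -- b, d > 0
  rcases eq_or_lt_of_le ha with ha0 | ha0
  · rw [← ha0]; simp only [klt, zero_add, zero_mul, sub_zero, zero_sub, neg_zero]
    have : c * Real.log (b + d) ≥ c * Real.log d :=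
      mul_le_mul_of_nonneg_left (Real.log_le_log hd0 (by linarith)) hc
    linarith
  rcases eq_or_lt_of_le hc with hc0 | hc0
  · rw [← hc0]; simp only [klt, add_zero, zero_mul, sub_zero, zero_sub, neg_zero]
    have : a * Real.log (b + d) ≥ a * Real.log b :=
      mul_le_mul_of_nonneg_left (Real.log_le_log hb0 (by linarith)) ha
    linarith
  -- all positive
  have hbd : (0:ℝ) < b + d := by linarith
  have key := Real.convexOn_mul_log.2 (mem_Ici.2 (le_of_lt (div_pos ha0 hb0)))
    (mem_Ici.2 (le_of_lt (div_pos hc0 hd0)))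
    (le_of_lt (div_pos hb0 hbd)) (le_of_lt (div_pos hd0 hbd))
    (by field_simp)
  simp only [smul_eq_mul] at key
  have e1 : b / (b + d) * (a / b) + d / (b + d) * (c / d) = (a + c) / (b + d) := by
    field_simp
  rw [e1] at key
  have key' := mul_le_mul_of_nonneg_left key (le_of_lt hbd)
  have e2 : (b + d) * ((a + c) / (b + d) * Real.log ((a + c) / (b + d))) = klt (a+c) (b+d) := by
    rw [Real.log_div (by linarith) (ne_of_gt hbd)]
    field_simp [klt]; unfold klt; ring
  have e3 : (b + d) * (b / (b + d) * (a / b * Real.log (a / b)) + d / (b + d) * (c / d * Real.log (c / d)))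
      = klt a b + klt c d := by
    rw [Real.log_div (ne_of_gt ha0) (ne_of_gt hb0), Real.log_div (ne_of_gt hc0) (ne_of_gt hd0)]
    field_simp [klt]; unfold klt; ring
  rw [e2, e3] at key'
  exact key'

/-- superadditivity of `Fd` on nonneg reals. -/
lemma Fd_add_le {a b c d : ℝ} (ha : 0 ≤ a) (hb : 0 ≤ b) (hc : 0 ≤ c) (hd : 0 ≤ d) :
    Fd (a + c) (b + d) ≤ Fd a b + Fd c d := by
  have hm1 : 0 ≤ (a + b) / 2 := by linarith
  have hm2 : 0 ≤ (c + d) / 2 := by linarith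
  have h1 : klt (a + c) ((a + b)/2 + (c + d)/2) ≤ klt a ((a+b)/2) + klt c ((c+d)/2) :=
    klt_add_le ha hm1 hc hm2 (fun h => by linarith) (fun h => by linarith)
  have h2 : klt (b + d) ((a + b)/2 + (c + d)/2) ≤ klt b ((a+b)/2) + klt d ((c+d)/2) :=
    klt_add_le hb hm1 hd hm2 (fun h => by linarith) (fun h => by linarith)
  have e : (a + b)/2 + (c + d)/2 = ((a + c) + (b + d))/2 := by ring
  rw [e] at h1 h2
  rw [Fd_eq_klt (a+c) (b+d), Fd_eq_klt a b, Fd_eq_klt c d]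
  linarith

/-- Finset superadditivity of `Fd`. -/
lemma Fd_sum_le {ι : Type*} (s : Finset ι) (u v : ι → ℝ)
    (hu : ∀ i ∈ s, 0 ≤ u i) (hv : ∀ i ∈ s, 0 ≤ v i) :
    Fd (∑ i ∈ s, u i) (∑ i ∈ s, v i) ≤ ∑ i ∈ s, Fd (u i) (v i) := by
  induction s using Finset.cons_induction with
  | empty => simp [Fd_zero_zero]
  | cons a s' hni ih =>
    rw [Finset.sum_cons, Finset.sum_cons, Finset.sum_cons]
    have h1 : Fd (u a + ∑ i ∈ s', u i) (v a + ∑ i ∈ s', v i)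
        ≤ Fd (u a) (v a) + Fd (∑ i ∈ s', u i) (∑ i ∈ s', v i) :=
      Fd_add_le (hu a (Finset.mem_cons_self a s'))
        (hv a (Finset.mem_cons_self a s'))
        (Finset.sum_nonneg fun i hi => hu i (Finset.mem_cons_of_mem hi))
        (Finset.sum_nonneg fun i hi => hv i (Finset.mem_cons_of_mem hi))
    have h2 := ih (fun i hi => hu i (Finset.mem_cons_of_mem hi))
      (fun i hi => hv i (Finset.mem_cons_of_mem hi))
    linarith


/-- FTC: `∫ u in a..b, exp (-(u*t)) = (exp (-(a*t)) - exp (-(b*t)))/t` for `t > 0`. -/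
lemma integral_exp_neg_mul_ab (a b t : ℝ) (ht : 0 < t) :
    ∫ u in a..b, Real.exp (-(u*t)) = (Real.exp (-(a*t)) - Real.exp (-(b*t)))/t := by
  have hD : ∀ u : ℝ, HasDerivAt (fun u => -Real.exp (-(u*t)) / t) (Real.exp (-(u*t))) u := by
    intro u
    have h1 : HasDerivAt (fun u : ℝ => -(u*t)) (-t) u := by
      simpa using (hasDerivAt_neg u).mul_const t
    have h2 := (Real.hasDerivAt_exp (-(u*t))).comp u h1
    have h3 := (h2.neg).div_const t
    exact h3.congr_deriv (by field_simp)
  rw [intervalIntegral.integral_eq_sub_of_hasDerivAt (fun u _ => hD u)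
    ((Real.continuous_exp.comp (by fun_prop)).intervalIntegrable a b)]
  ring

/-- Laplace: `∫ t in Ioi 0, exp (-(u*t)) = 1/u` for `u > 0`. -/
lemma integral_exp_neg_mul_Ioi (u : ℝ) (hu : 0 < u) :
    ∫ t in Ioi (0:ℝ), Real.exp (-(u*t)) = 1/u := by
  have := integral_comp_mul_left_Ioi (fun x => Real.exp (-x)) 0 hu
  simp only [mul_zero] at this
  rw [show (∫ t in Ioi (0:ℝ), Real.exp (-(u*t))) = ∫ x in Ioi (0:ℝ), (fun x => Real.exp (-x)) (u * x) from rfl,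
    this, integral_exp_neg_Ioi]
  simp [one_div]

lemma integrableOn_exp_neg_mul_Ioi (u : ℝ) (hu : 0 < u) :
    IntegrableOn (fun t => Real.exp (-(u*t))) (Ioi (0:ℝ)) := by
  have := exp_neg_integrableOn_Ioi 0 hu
  simpa [neg_mul] using this

/-- interval integrability of `log` on nonnegative intervals. -/
lemma intervalIntegrable_log₀ {a b : ℝ} (ha : 0 ≤ a) (hb : 0 ≤ b) :
    IntervalIntegrable Real.log volume a b := by
  suffices H : ∀ c : ℝ, 0 ≤ c → IntervalIntegrable Real.log volume 0 c by
    exact ((H a ha).symm).trans (H b hb)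
  intro c hc
  rcases eq_or_lt_of_le hc with hc0 | hc0
  · rw [← hc0]
  have hg : IntervalIntegrable (fun x : ℝ => 2 * x ^ (-(1/2) : ℝ) + |Real.log c|) volume 0 c := by
    exact ((intervalIntegral.intervalIntegrable_rpow' (by norm_num)).const_mul 2).add
      intervalIntegrable_const
  refine hg.mono_fun Real.measurable_log.aestronglyMeasurable ?_
  rw [Set.uIoc_of_le hc]
  filter_upwards [ae_restrict_mem measurableSet_Ioc] with x hx
  obtain ⟨hx0, hxc⟩ := hx
  have hrp : (0:ℝ) < x ^ (-(1/2) : ℝ) := Real.rpow_pos_of_pos hx0 _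
  have hgnn : 0 ≤ 2 * x ^ (-(1/2) : ℝ) + |Real.log c| := by positivity
  rw [Real.norm_eq_abs, Real.norm_eq_abs, abs_of_nonneg hgnn]
  rcases le_or_gt x 1 with hx1 | hx1
  · have hlog : Real.log x ≤ 0 := Real.log_nonpos (le_of_lt hx0) hx1
    rw [abs_of_nonpos hlog]
    have h1 : Real.log (x ^ (-(1/2) : ℝ)) = (-(1/2)) * Real.log x := Real.log_rpow hx0 _
    have h2 : Real.log (x ^ (-(1/2) : ℝ)) ≤ x ^ (-(1/2) : ℝ) - 1 :=
      Real.log_le_sub_one_of_pos hrp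
    have habs : 0 ≤ |Real.log c| := abs_nonneg _
    nlinarith
  · have hlog : 0 ≤ Real.log x := Real.log_nonneg (le_of_lt hx1)
    rw [abs_of_nonneg hlog]
    have : Real.log x ≤ Real.log c := Real.log_le_log hx0 hxc
    have : Real.log x ≤ |Real.log c| := this.trans (le_abs_self _)
    linarith


section Frullani

lemma frullani {a b : ℝ} (ha : 0 < a) (hab : a ≤ b) :
    ∫⁻ t in Ioi (0:ℝ), ENNReal.ofReal ((Real.exp (-(a*t)) - Real.exp (-(b*t)))/t)
      = ENNReal.ofReal (Real.log b - Real.log a) := by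
  have hb : 0 < b := lt_of_lt_of_le ha hab
  have step1 : ∀ t ∈ Ioi (0:ℝ),
      ENNReal.ofReal ((Real.exp (-(a*t)) - Real.exp (-(b*t)))/t)
        = ∫⁻ u in Ioc a b, ENNReal.ofReal (Real.exp (-(u*t))) := by
    intro t ht
    rw [← ofReal_integral_eq_lintegral_ofReal
      (Continuous.integrableOn_Ioc (by fun_prop : Continuous fun u : ℝ => Real.exp (-(u*t))))
      (ae_of_all _ fun u => (Real.exp_pos _).le)]
    congr 1
    rw [← intervalIntegral.integral_of_le hab, integral_exp_neg_mul_ab a b t ht]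
  rw [setLIntegral_congr_fun measurableSet_Ioi step1]
  rw [lintegral_lintegral_swap]
  · have step2 : ∀ u ∈ Ioc a b,
        (∫⁻ t in Ioi (0:ℝ), ENNReal.ofReal (Real.exp (-(u*t)))) = ENNReal.ofReal (1/u) := by
      intro u hu
      have hu0 : 0 < u := lt_trans ha hu.1
      rw [← ofReal_integral_eq_lintegral_ofReal (integrableOn_exp_neg_mul_Ioi u hu0)
        (ae_of_all _ fun t => (Real.exp_pos _).le)]
      rw [integral_exp_neg_mul_Ioi u hu0]
    rw [setLIntegral_congr_fun measurableSet_Ioc step2]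
    have hint : IntegrableOn (fun u : ℝ => 1/u) (Ioc a b) := by
      have : ContinuousOn (fun u : ℝ => 1/u) (Icc a b) := by
        apply ContinuousOn.div continuousOn_const continuousOn_id
        intro x hx; exact ne_of_gt (lt_of_lt_of_le ha hx.1)
      exact (this.integrableOn_Icc).mono_set Ioc_subset_Icc_self
    rw [← ofReal_integral_eq_lintegral_ofReal hint (by
      filter_upwards [ae_restrict_mem measurableSet_Ioc] with u hu
      have : 0 < u := lt_trans ha hu.1
      positivity)]
    congr 1
    rw [← intervalIntegral.integral_of_le hab, integral_one_div
      (notMem_uIcc_of_lt ha hb), Real.log_div (ne_of_gt hb) (ne_of_gt ha)]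
  · apply Measurable.aemeasurable
    apply Measurable.ennreal_ofReal
    fun_prop

end Frullani



lemma intervalIntegrable_log_add {p q c : ℝ} (hp : 0 ≤ p) (hq : 0 ≤ q) (hc : 0 ≤ c) :
    IntervalIntegrable (fun s => Real.log (c + s)) volume p q := by
  have h := (intervalIntegrable_log₀ (by linarith : (0:ℝ) ≤ p + c)
    (by linarith : (0:ℝ) ≤ q + c)).comp_add_right c
  simp only [add_sub_cancel_right] at h
  refine h.congr ?_
  intro s _; dsimp only
  rw [add_comm]

lemma integrand_log_intervalIntegrable {p q : ℝ} (hp : 0 ≤ p) (hq : 0 ≤ q) :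
    IntervalIntegrable (fun s => Real.log (q + s) - Real.log (p + s)) volume p q :=
  (intervalIntegrable_log_add hp hq hq).sub (intervalIntegrable_log_add hp hq hp)

lemma integral_log_sub {p q : ℝ} (hp : 0 ≤ p) (hpq : p ≤ q) :
    ∫ s in p..q, (Real.log (q + s) - Real.log (p + s))
      = phiF (2*q) + phiF (2*p) - 2 * phiF (p + q) := by
  set Ψ : ℝ → ℝ := fun s => ((q+s) * Real.log (q+s) - (q+s)) - ((p+s) * Real.log (p+s) - (p+s))
    with hΨ
  have hq : 0 ≤ q := le_trans hp hpq
  have hcont : ContinuousOn Ψ (Icc p q) := by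
    apply Continuous.continuousOn
    have h1 : Continuous fun s : ℝ => (q+s) * Real.log (q+s) :=
      Real.continuous_mul_log.comp (continuous_const.add continuous_id)
    have h2 : Continuous fun s : ℝ => (p+s) * Real.log (p+s) :=
      Real.continuous_mul_log.comp (continuous_const.add continuous_id)
    fun_prop
  have hderiv : ∀ x ∈ Ioo p q, HasDerivWithinAt Ψ
      (Real.log (q + x) - Real.log (p + x)) (Ioi x) x := by
    intro x hx
    have hx0 : 0 < x := lt_of_le_of_lt hp hx.1
    have hqx : q + x ≠ 0 := by positivity
    have hpx : p + x ≠ 0 := by positivity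
    have d1 : HasDerivAt (fun s : ℝ => q + s) 1 x := by
      simpa using (hasDerivAt_id x).const_add q
    have d2 : HasDerivAt (fun s : ℝ => p + s) 1 x := by
      simpa using (hasDerivAt_id x).const_add p
    have D1 : HasDerivAt (fun s : ℝ => (q+s) * Real.log (q+s)) (Real.log (q+x) + 1) x := by
      have := (Real.hasDerivAt_mul_log hqx).comp x d1
      simpa [Function.comp_def] using this
    have D2 : HasDerivAt (fun s : ℝ => (p+s) * Real.log (p+s)) (Real.log (p+x) + 1) x := by
      have := (Real.hasDerivAt_mul_log hpx).comp x d2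
      simpa [Function.comp_def] using this
    have : HasDerivAt Ψ ((Real.log (q+x) + 1 - 1) - (Real.log (p+x) + 1 - 1)) x :=
      (D1.sub d1).sub (D2.sub d2)
    simpa using this.hasDerivWithinAt
  rw [intervalIntegral.integral_eq_sub_of_hasDeriv_right_of_le hpq hcont hderiv
    (integrand_log_intervalIntegrable hp hq)]
  simp only [hΨ, phiF]
  ring_nf

lemma phiF_two_mul {x : ℝ} (hx : 0 ≤ x) : phiF (2*x) = 2 * phiF x + 2*x*Real.log 2 := by
  rcases eq_or_lt_of_le hx with h | h
  · simp [phiF, ← h]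
  · unfold phiF
    rw [Real.log_mul (by norm_num) (ne_of_gt h)]
    ring

lemma phiF_add_self {x : ℝ} (hx : 0 < x) : phiF (2*x) = 2 * phiF x + 2*x*Real.log 2 :=
  phiF_two_mul hx.le

/-- The integral representation, strict case. -/
lemma Ee_eq_of_lt {p q : ℝ} (hp : 0 ≤ p) (hpq : p < q) :
    (∫⁻ t in Ioi (0:ℝ), ENNReal.ofReal
        ((Real.exp (-(p*(t/2))) - Real.exp (-(q*(t/2))))^2 / t^2))
      = ENNReal.ofReal (phiF p + phiF q - 2 * phiF ((p+q)/2)) := by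
  have hq : 0 < q := lt_of_le_of_lt hp hpq
  set G : ℝ → ℝ → ℝ := fun t s => Real.exp (-(s*(t/2))) *
    ((Real.exp (-(p*(t/2))) - Real.exp (-(q*(t/2))))/(2*t)) with hG
  -- Step A
  have stepA : ∀ t ∈ Ioi (0:ℝ),
      ENNReal.ofReal ((Real.exp (-(p*(t/2))) - Real.exp (-(q*(t/2))))^2 / t^2)
        = ∫⁻ s in Ioc p q, ENNReal.ofReal (G t s) := by
    intro t ht
    have ht0 : (0:ℝ) < t := ht
    have hD : 0 ≤ Real.exp (-(p*(t/2))) - Real.exp (-(q*(t/2))) := by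
      have : -(q*(t/2)) ≤ -(p*(t/2)) := by nlinarith
      linarith [Real.exp_le_exp.2 this]
    rw [← ofReal_integral_eq_lintegral_ofReal
      (Continuous.integrableOn_Ioc (by fun_prop : Continuous fun s : ℝ => G t s))
      (ae_of_all _ fun s => by
        have := Real.exp_pos (-(s*(t/2)))
        have h2 : 0 ≤ (Real.exp (-(p*(t/2))) - Real.exp (-(q*(t/2))))/(2*t) := by positivity
        positivity)]
    congr 1
    rw [← intervalIntegral.integral_of_le hpq.le]
    simp only [hG]
    rw [intervalIntegral.integral_mul_const, integral_exp_neg_mul_ab p q (t/2) (by positivity)]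
    field_simp
  rw [setLIntegral_congr_fun measurableSet_Ioi stepA]
  rw [lintegral_lintegral_swap]
  · -- Step C: inner t-integral
    have stepC : ∀ s ∈ Ioc p q,
        (∫⁻ t in Ioi (0:ℝ), ENNReal.ofReal (G t s))
          = ENNReal.ofReal ((Real.log (q+s) - Real.log (p+s))/2) := by
      intro s hs
      have hs0 : 0 < s := lt_of_le_of_lt hp hs.1
      have hps : 0 < (p+s)/2 := by positivity
      have hqs : (p+s)/2 ≤ (q+s)/2 := by linarith [hs.2, hs.1]
      have hGrw : ∀ t ∈ Ioi (0:ℝ), ENNReal.ofReal (G t s)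
          = ENNReal.ofReal (1/2 : ℝ) * ENNReal.ofReal
              ((Real.exp (-(((p+s)/2)*t)) - Real.exp (-(((q+s)/2)*t)))/t) := by
        intro t ht
        rw [← ENNReal.ofReal_mul (by norm_num)]
        congr 1
        have e1 : -(s*(t/2)) + -(p*(t/2)) = -(((p+s)/2)*t) := by ring
        have e2 : -(s*(t/2)) + -(q*(t/2)) = -(((q+s)/2)*t) := by ring
        have egs : G t s = (Real.exp (-(s*(t/2)) + -(p*(t/2)))
            - Real.exp (-(s*(t/2)) + -(q*(t/2))))/(2*t) := by
          simp only [hG]; rw [Real.exp_add, Real.exp_add]; ring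
        rw [egs, e1, e2]; ring
      rw [setLIntegral_congr_fun measurableSet_Ioi hGrw,
        lintegral_const_mul' _ _ ENNReal.ofReal_ne_top,
        frullani hps hqs, ← ENNReal.ofReal_mul (by norm_num)]
      congr 1
      rw [Real.log_div (by positivity) (by norm_num), Real.log_div (by positivity) (by norm_num)]
      ring
    -- Step D: outer s-integral
    rw [setLIntegral_congr_fun measurableSet_Ioc stepC]
    have hint : IntegrableOn (fun s => (Real.log (q+s) - Real.log (p+s))/2) (Ioc p q) := by
      rw [← intervalIntegrable_iff_integrableOn_Ioc_of_le hpq.le]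
      exact (integrand_log_intervalIntegrable hp hq.le).div_const 2
    rw [← ofReal_integral_eq_lintegral_ofReal hint (by
      filter_upwards [ae_restrict_mem measurableSet_Ioc] with s hs
      have hs0 : 0 < s := lt_of_le_of_lt hp hs.1
      have h1 : (0:ℝ) < p + s := by positivity
      have h2 : Real.log (p+s) ≤ Real.log (q+s) := Real.log_le_log h1 (by linarith [hs.2])
      simp only [Pi.zero_apply]
      linarith)]
    congr 1
    rw [← intervalIntegral.integral_of_le hpq.le, intervalIntegral.integral_div,
      integral_log_sub hp hpq.le, phiF_two_mul hq.le, phiF_two_mul hp,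
      show phiF (p+q) = 2 * phiF ((p+q)/2) + 2*((p+q)/2)*Real.log 2 by
        rw [← phiF_two_mul (by linarith : (0:ℝ) ≤ (p+q)/2)]; congr 1; ring]
    ring
  · apply Measurable.aemeasurable
    apply Measurable.ennreal_ofReal
    have : Measurable (Function.uncurry fun t s : ℝ => G t s) := by
      simp only [hG, Function.uncurry]
      fun_prop
    exact this

lemma Fd2_eq (p q : ℝ) : phiF p + phiF q - 2 * phiF ((p+q)/2) = 2 * Fd p q := by
  unfold Fd; ring

noncomputable def Ee (p q : ℝ) : ENNReal :=
  ∫⁻ t in Ioi (0:ℝ), ENNReal.ofReal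
    ((Real.exp (-(p*(t/2))) - Real.exp (-(q*(t/2))))^2 / t^2)

lemma Ee_eq {p q : ℝ} (hp : 0 ≤ p) (hq : 0 ≤ q) :
    Ee p q = ENNReal.ofReal (2 * Fd p q) := by
  rcases lt_trichotomy p q with h | h | h
  · rw [Ee, Ee_eq_of_lt hp h, Fd2_eq]
  · subst h
    have : Fd p p = 0 := Fd_self p
    rw [Ee, this]
    simp
  · have e : Ee p q = Ee q p := by
      unfold Ee
      apply lintegral_congr
      intro t
      rw [show (Real.exp (-(p*(t/2))) - Real.exp (-(q*(t/2))))^2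
        = (Real.exp (-(q*(t/2))) - Real.exp (-(p*(t/2))))^2 by rw [← neg_sub, neg_sq]]
    rw [e, Ee, Ee_eq_of_lt hq h, Fd2_eq, Fd_comm]

/-- Pointwise triangle inequality for `sqrt ∘ Fd` (Endres–Schindelin). -/
lemma sqrt_Fd_triangle {p q r : ℝ} (hp : 0 ≤ p) (hq : 0 ≤ q) (hr : 0 ≤ r) :
    Real.sqrt (Fd p r) ≤ Real.sqrt (Fd p q) + Real.sqrt (Fd q r) := by
  set fE : ℝ → ℝ → ℝ → ENNReal := fun x y t =>
    ENNReal.ofReal (|Real.exp (-(x*(t/2))) - Real.exp (-(y*(t/2)))| / t) with hfE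
  have hmeas : ∀ x y : ℝ, AEMeasurable (fE x y) (volume.restrict (Ioi (0:ℝ))) := by
    intro x y
    apply Measurable.aemeasurable
    apply Measurable.ennreal_ofReal
    fun_prop
  have hEe : ∀ x y : ℝ, (∫⁻ t in Ioi (0:ℝ), fE x y t ^ (2:ℝ)) = Ee x y := by
    intro x y
    unfold Ee
    apply setLIntegral_congr_fun measurableSet_Ioi
    intro t ht
    have ht0 : (0:ℝ) < t := ht
    rw [hfE]; dsimp only
    rw [ENNReal.ofReal_rpow_of_nonneg (div_nonneg (abs_nonneg _) ht0.le) (by norm_num)]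
    congr 1
    rw [show ((2:ℝ)) = ((2:ℕ):ℝ) by norm_num, Real.rpow_natCast]
    rw [div_pow, sq_abs]
  have key : (Ee p r) ^ (1/2:ℝ) ≤ (Ee p q) ^ (1/2:ℝ) + (Ee q r) ^ (1/2:ℝ) := by
    rw [← hEe p r, ← hEe p q, ← hEe q r]
    have step1 : (∫⁻ t in Ioi (0:ℝ), fE p r t ^ (2:ℝ)) ^ (1/2:ℝ)
        ≤ (∫⁻ t in Ioi (0:ℝ), (fE p q + fE q r) t ^ (2:ℝ)) ^ (1/2:ℝ) := by
      apply ENNReal.rpow_le_rpow _ (by norm_num)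
      apply lintegral_mono_ae
      filter_upwards [ae_restrict_mem measurableSet_Ioi] with t ht
      apply ENNReal.rpow_le_rpow _ (by norm_num)
      have ht0 : (0:ℝ) < t := ht
      rw [hfE]
      simp only [Pi.add_apply]
      rw [← ENNReal.ofReal_add (div_nonneg (abs_nonneg _) ht0.le)
        (div_nonneg (abs_nonneg _) ht0.le)]
      apply ENNReal.ofReal_le_ofReal
      rw [← add_div]
      apply div_le_div_of_nonneg_right (abs_sub_le _ _ _) ht0.le
    exact step1.trans (ENNReal.lintegral_Lp_add_le (hmeas p q) (hmeas q r) (by norm_num))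
  rw [Ee_eq hp hr, Ee_eq hp hq, Ee_eq hq hr] at key
  have h2 : (0:ℝ) ≤ 2 := by norm_num
  have hofr : ∀ x y : ℝ, 0 ≤ x → 0 ≤ y →
      (ENNReal.ofReal (2 * Fd x y)) ^ (1/2:ℝ) = ENNReal.ofReal (Real.sqrt (2 * Fd x y)) := by
    intro x y hx hy
    rw [ENNReal.ofReal_rpow_of_nonneg (mul_nonneg h2 (Fd_nonneg hx hy)) (by norm_num),
      ← Real.sqrt_eq_rpow]
  rw [hofr p r hp hr, hofr p q hp hq, hofr q r hq hr,
    ← ENNReal.ofReal_add (Real.sqrt_nonneg _) (Real.sqrt_nonneg _)] at key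
  have key2 : Real.sqrt (2 * Fd p r) ≤ Real.sqrt (2 * Fd p q) + Real.sqrt (2 * Fd q r) :=
    (ENNReal.ofReal_le_ofReal_iff (by positivity)).1 key
  rw [Real.sqrt_mul h2, Real.sqrt_mul h2, Real.sqrt_mul h2] at key2
  have hs2 : (0:ℝ) < Real.sqrt 2 := Real.sqrt_pos.2 (by norm_num)
  have := (mul_le_mul_iff_of_pos_left hs2).1 (by linarith [key2] :
    Real.sqrt 2 * Real.sqrt (Fd p r) ≤ Real.sqrt 2 * (Real.sqrt (Fd p q) + Real.sqrt (Fd q r)))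
  exact this

/-! ### JSD level -/

lemma half_klterm {a b : ℝ} (ha : 0 ≤ a) (hb : 0 ≤ b) :
    (1/2)*(if a = 0 then 0 else a * Real.log (a/((a+b)/2)))
      + (1/2)*(if b = 0 then 0 else b * Real.log (b/((a+b)/2))) = Fd a b := by
  rcases eq_or_lt_of_le ha with ha0 | ha0
  · rcases eq_or_lt_of_le hb with hb0 | hb0
    · simp [← ha0, ← hb0, Fd, phiF]
    · have hne : b ≠ 0 := ne_of_gt hb0
      rw [← ha0]
      rw [show (if (0:ℝ) = 0 then (0:ℝ) else 0 * Real.log (0/((0+b)/2))) = 0 from if_pos rfl,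
        if_neg hne]
      have e2 : b / ((0+b)/2) = 2 := by rw [zero_add]; field_simp
      rw [e2]
      unfold Fd phiF
      rw [show ((0+b)/2 : ℝ) = b/2 from by ring, Real.log_div hne (by norm_num),
        Real.log_zero]
      ring
  · rcases eq_or_lt_of_le hb with hb0 | hb0
    · have hne : a ≠ 0 := ne_of_gt ha0
      rw [← hb0]
      rw [show (if (0:ℝ) = 0 then (0:ℝ) else 0 * Real.log (0/((a+0)/2))) = 0 from if_pos rfl,
        if_neg hne]
      have e2 : a / ((a+0)/2) = 2 := by rw [add_zero]; field_simp
      rw [e2]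
      unfold Fd phiF
      rw [show ((a+0)/2 : ℝ) = a/2 from by ring, Real.log_div hne (by norm_num),
        Real.log_zero]
      ring
    · have hm : (0:ℝ) < (a+b)/2 := by linarith
      rw [if_neg (ne_of_gt ha0), if_neg (ne_of_gt hb0),
        Real.log_div (ne_of_gt ha0) (ne_of_gt hm),
        Real.log_div (ne_of_gt hb0) (ne_of_gt hm)]
      unfold Fd phiF
      ring

lemma JSD_eq_sqrt_sum {X : Type*} [Fintype X] {p q : X → ℝ}
    (hp : ∀ x, 0 ≤ p x) (hq : ∀ x, 0 ≤ q x) :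
    JSD p q = Real.sqrt (∑ x, Fd (p x) (q x)) := by
  unfold JSD KL
  congr 1
  rw [Finset.mul_sum, Finset.mul_sum, ← Finset.sum_add_distrib]
  exact Finset.sum_congr rfl fun x _ => half_klterm (hp x) (hq x)

lemma sqrt_sum_sq_add_le {X : Type*} [Fintype X] (u v : X → ℝ) :
    Real.sqrt (∑ x, (u x + v x)^2)
      ≤ Real.sqrt (∑ x, (u x)^2) + Real.sqrt (∑ x, (v x)^2) := by
  have h := norm_add_le (E := EuclideanSpace ℝ X)
    ((WithLp.equiv 2 (X → ℝ)).symm u) ((WithLp.equiv 2 (X → ℝ)).symm v)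
  rw [EuclideanSpace.norm_eq, EuclideanSpace.norm_eq, EuclideanSpace.norm_eq] at h
  simpa [Real.norm_eq_abs, sq_abs] using h

lemma JSD_triangle {X : Type*} [Fintype X] (p q r : X → ℝ)
    (hp : ∀ x, 0 ≤ p x) (hq : ∀ x, 0 ≤ q x) (hr : ∀ x, 0 ≤ r x) :
    JSD p r ≤ JSD p q + JSD q r := by
  rw [JSD_eq_sqrt_sum hp hr, JSD_eq_sqrt_sum hp hq, JSD_eq_sqrt_sum hq hr]
  set u : X → ℝ := fun x => Real.sqrt (Fd (p x) (q x)) with hu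
  set v : X → ℝ := fun x => Real.sqrt (Fd (q x) (r x)) with hv
  have h1 : ∑ x, Fd (p x) (r x) ≤ ∑ x, (u x + v x)^2 := by
    apply Finset.sum_le_sum
    intro x _
    have htri := sqrt_Fd_triangle (hp x) (hq x) (hr x)
    have h0 : 0 ≤ Real.sqrt (Fd (p x) (r x)) := Real.sqrt_nonneg _
    have := mul_self_le_mul_self h0 htri
    rw [Real.mul_self_sqrt (Fd_nonneg (hp x) (hr x))] at this
    calc Fd (p x) (r x) ≤ (Real.sqrt (Fd (p x) (q x)) + Real.sqrt (Fd (q x) (r x)))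
        * (Real.sqrt (Fd (p x) (q x)) + Real.sqrt (Fd (q x) (r x))) := this
      _ = (u x + v x)^2 := by rw [hu, hv]; ring
  calc Real.sqrt (∑ x, Fd (p x) (r x)) ≤ Real.sqrt (∑ x, (u x + v x)^2) :=
        Real.sqrt_le_sqrt h1
    _ ≤ Real.sqrt (∑ x, (u x)^2) + Real.sqrt (∑ x, (v x)^2) := sqrt_sum_sq_add_le u v
    _ = _ := by
        congr 2 <;> exact Finset.sum_congr rfl fun x _ => Real.sq_sqrt
          (Fd_nonneg (by first | exact hp x | exact hq x) (by first | exact hq x | exact hr x))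

/-! ### abstraction matrices -/

lemma absMatrix_exists_fun {N M : Type*} [Fintype N] [Fintype M] [DecidableEq N] (α : Matrix N M ℝ)
    (hα : IsAbsMatrix α) : ∃ g : M → N, ∀ j i, α j i = if g i = j then 1 else 0 := by
  choose g hg using hα.2.1
  refine ⟨g, fun j i => ?_⟩
  by_cases h : g i = j
  · rw [if_pos h, ← h]; exact (hg i).1
  · rw [if_neg h]
    rcases hα.1 j i with h0 | h1
    · exact h0
    · exact absurd ((hg i).2 j h1).symm h

lemma absMatrix_entry_nonneg {N M : Type*} [Fintype N] [Fintype M] {α : Matrix N M ℝ}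
    (hα : IsAbsMatrix α) (j : N) (i : M) : 0 ≤ α j i := by
  rcases hα.1 j i with h | h <;> rw [h] <;> norm_num

lemma sum_mul_absFun {N M : Type*} [Fintype N] [Fintype M] [DecidableEq N]
    {α : Matrix N M ℝ} {g : M → N} (hg : ∀ j i, α j i = if g i = j then 1 else 0)
    (u : M → ℝ) (j : N) :
    ∑ i, α j i * u i = ∑ i ∈ Finset.univ.filter (fun i => g i = j), u i := by
  rw [Finset.sum_filter]
  apply Finset.sum_congr rfl
  intro i _
  rw [hg j i]
  by_cases h : g i = j
  · rw [if_pos h, if_pos h, one_mul]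
  · rw [if_neg h, if_neg h, zero_mul]

/-- data processing: pushing by an abstraction matrix does not increase JSD. -/
lemma JSD_push_le {N M : Type*} [Fintype N] [Fintype M] (α : Matrix N M ℝ)
    (hα : IsAbsMatrix α) (u v : M → ℝ) (hu : ∀ i, 0 ≤ u i) (hv : ∀ i, 0 ≤ v i) :
    JSD (fun j => ∑ i, α j i * u i) (fun j => ∑ i, α j i * v i) ≤ JSD u v := by
  classical
  obtain ⟨g, hg⟩ := absMatrix_exists_fun α hα
  have hunn : ∀ j, 0 ≤ ∑ i, α j i * u i := fun j =>
    Finset.sum_nonneg fun i _ => mul_nonneg (absMatrix_entry_nonneg hα j i) (hu i)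
  have hvnn : ∀ j, 0 ≤ ∑ i, α j i * v i := fun j =>
    Finset.sum_nonneg fun i _ => mul_nonneg (absMatrix_entry_nonneg hα j i) (hv i)
  rw [JSD_eq_sqrt_sum hunn hvnn, JSD_eq_sqrt_sum hu hv]
  apply Real.sqrt_le_sqrt
  calc ∑ j, Fd (∑ i, α j i * u i) (∑ i, α j i * v i)
      = ∑ j, Fd (∑ i ∈ Finset.univ.filter (fun i => g i = j), u i)
          (∑ i ∈ Finset.univ.filter (fun i => g i = j), v i) := by
        exact Finset.sum_congr rfl fun j _ => by rw [sum_mul_absFun hg, sum_mul_absFun hg]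
    _ ≤ ∑ j, ∑ i ∈ Finset.univ.filter (fun i => g i = j), Fd (u i) (v i) :=
        Finset.sum_le_sum fun j _ => Fd_sum_le _ _ _ (fun i _ => hu i) (fun i _ => hv i)
    _ = ∑ i, Fd (u i) (v i) :=
        Finset.sum_fiberwise_of_maps_to (fun i _ => Finset.mem_univ (g i)) _

lemma mul_abs_col {Y X X' : Type*} [Fintype Y] [Fintype X] [Fintype X'] [DecidableEq X']
    (M : Matrix Y X' ℝ) {α : Matrix X' X ℝ} {g : X → X'}
    (hg : ∀ j i, α j i = if g i = j then 1 else 0) (y : Y) (x : X) :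
    (M * α) y x = M y (g x) := by
  classical
  rw [Matrix.mul_apply]
  have : ∀ x', M y x' * α x' x = if g x = x' then M y x' else 0 := by
    intro x'
    rw [hg x' x]
    by_cases h : g x = x'
    · rw [if_pos h, if_pos h, mul_one]
    · rw [if_neg h, if_neg h, mul_zero]
  simp_rw [this]
  rw [Finset.sum_ite_eq]
  simp


end AuxIC

theorem ic_triangle {X X' X'' Y Y' Y'' : Type*}
    [Fintype X] [Nonempty X] [Fintype X'] [Nonempty X'] [Fintype X''] [Nonempty X'']
    [Fintype Y] [Nonempty Y] [Fintype Y'] [Nonempty Y'] [Fintype Y''] [Nonempty Y'']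
    (μ : Matrix Y X ℝ) (μ' : Matrix Y' X' ℝ) (μ'' : Matrix Y'' X'' ℝ)
    (αX : Matrix X' X ℝ) (αY : Matrix Y' Y ℝ)
    (βX : Matrix X'' X' ℝ) (βY : Matrix Y'' Y' ℝ)
    (hμ : IsColStoch μ) (hμ' : IsColStoch μ') (hμ'' : IsColStoch μ'')
    (hαX : IsAbsMatrix αX) (hαY : IsAbsMatrix αY)
    (hβX : IsAbsMatrix βX) (hβY : IsAbsMatrix βY) :
    supJSD (βY * αY * μ) (μ'' * βX * αX)
      ≤ supJSD (αY * μ) (μ' * αX) + supJSD (βY * μ') (μ'' * βX) := by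
  classical
  obtain ⟨gX, hgX⟩ := absMatrix_exists_fun αX hαX
  apply Finset.sup'_le
  intro x _
  set u : Y' → ℝ := fun y' => (αY * μ) y' x with hu
  set v : Y' → ℝ := fun y' => μ' y' (gX x) with hv
  set w : Y'' → ℝ := fun y'' => (μ'' * βX) y'' (gX x) with hw
  -- nonnegativity
  have hunn : ∀ y', 0 ≤ u y' := by
    intro y'
    rw [hu]
    simp only [Matrix.mul_apply]
    exact Finset.sum_nonneg fun y _ =>
      mul_nonneg (absMatrix_entry_nonneg hαY y' y) (hμ.1 y x)
  have hvnn : ∀ y', 0 ≤ v y' := fun y' => hμ'.1 y' (gX x)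
  have hwnn : ∀ y'', 0 ≤ w y'' := by
    intro y''
    rw [hw]
    simp only [Matrix.mul_apply]
    exact Finset.sum_nonneg fun x'' _ =>
      mul_nonneg (hμ''.1 y'' x'') (absMatrix_entry_nonneg hβX x'' (gX x))
  have hBunn : ∀ y'', 0 ≤ ∑ y', βY y'' y' * u y' := fun y'' =>
    Finset.sum_nonneg fun y' _ => mul_nonneg (absMatrix_entry_nonneg hβY y'' y') (hunn y')
  have hBvnn : ∀ y'', 0 ≤ ∑ y', βY y'' y' * v y' := fun y'' =>
    Finset.sum_nonneg fun y' _ => mul_nonneg (absMatrix_entry_nonneg hβY y'' y') (hvnn y')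
  -- column identifications
  have hcol1 : (fun y'' => (βY * αY * μ) y'' x) = fun y'' => ∑ y', βY y'' y' * u y' := by
    funext y''
    rw [Matrix.mul_assoc, Matrix.mul_apply]
  have hcol2 : (fun y'' => (μ'' * βX * αX) y'' x) = w := by
    funext y''
    exact mul_abs_col (μ'' * βX) hgX y'' x
  have hcol3 : (fun y' => (μ' * αX) y' x) = v := by
    funext y'
    exact mul_abs_col μ' hgX y' x
  have hcol4 : (fun y'' => ∑ y', βY y'' y' * v y') = fun y'' => (βY * μ') y'' (gX x) := by
    funext y''
    rw [Matrix.mul_apply]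
  rw [hcol1, hcol2]
  calc JSD (fun y'' => ∑ y', βY y'' y' * u y') w
      ≤ JSD (fun y'' => ∑ y', βY y'' y' * u y') (fun y'' => ∑ y', βY y'' y' * v y')
        + JSD (fun y'' => ∑ y', βY y'' y' * v y') w :=
        JSD_triangle _ _ _ hBunn hBvnn hwnn
    _ ≤ JSD u v + JSD (fun y'' => ∑ y', βY y'' y' * v y') w :=
        add_le_add_left (JSD_push_le βY hβY u v hunn hvnn) _
    _ ≤ supJSD (αY * μ) (μ' * αX) + supJSD (βY * μ') (μ'' * βX) := by
        apply add_le_add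
        · have : JSD u v = JSD (fun y' => (αY * μ) y' x) (fun y' => (μ' * αX) y' x) := by
            rw [hcol3]
          rw [this]
          unfold supJSD
          exact Finset.le_sup'
            (fun x0 => JSD (fun y' => (αY * μ) y' x0) (fun y' => (μ' * αX) y' x0))
            (Finset.mem_univ x)
        · rw [hcol4, hw]
          unfold supJSD
          exact Finset.le_sup'
            (fun x' => JSD (fun y'' => (βY * μ') y'' x') (fun y'' => (μ'' * βX) y'' x'))
            (Finset.mem_univ (gX x))
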